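/- Let Σ = {0,1,#}, and consider the reduction K(W_1,…,W_q) = T #^{3m} S(W_1) #^{3m} ⋯ #^{3m} S(W_q) over Γ = {b_1,…,b_m} ⊆ Σ \ {#}, with gc the (k-1)-tuple of length constraints (m−1, 3m−1), where S(W_i) and T are as defined (S(W_i) = w_{i,1} #^{m-1} ⋯ #^{m-1} w_{i,k} with alph(w_{i,j}) = W_{i,j}, and T the # -universal gadget satisfying SubSeq_gc(T) = {p ∈ Σ^k : |p|_# ≥ 1}). Then SubSeq_gc(K(W_1,…,W_q)) = Σ^k if and only if ⋃_{i∈[q]} W_{i,1}·W_{i,2}⋯W_{i,k} = Γ^k. -/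

import Mathlib

/-- `p` is a subsequence of `v` via an embedding whose `i`-th gap length lies between
`lo i` and `hi i`. -/
def IsLenSubseq {α : Type*} (v p : List α) (lo hi : ℕ → ℕ) : Prop :=
  ∃ e : ℕ → ℕ,
    (∀ i j, i < j → j < p.length → e i < e j) ∧
    (∀ i, i < p.length → e i < v.length) ∧
    (∀ i, i < p.length → v[e i]? = p[i]?) ∧
    (∀ i, i + 1 < p.length →
      lo i ≤ e (i + 1) - (e i + 1) ∧ e (i + 1) - (e i + 1) ≤ hi i)


lemma mem_intersperse_of_mem {α : Type*} (sep : α) {x : α} :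
    ∀ {L : List α}, x ∈ L → x ∈ L.intersperse sep := by
  intro L
  induction L with
  | nil => intro h; exact absurd h List.not_mem_nil
  | cons a t ih =>
    intro h
    cases t with
    | nil => simpa using h
    | cons b t' =>
      rw [List.intersperse_cons_cons]
      rcases List.mem_cons.mp h with h | h
      · exact h ▸ List.mem_cons_self
      · exact List.mem_cons_of_mem _ (List.mem_cons_of_mem _ (ih h))

lemma isLenSubseq_of_infix {α : Type*} {v w p : List α} {lo hi : ℕ → ℕ}
    (hvw : v <:+: w) (h : IsLenSubseq v p lo hi) : IsLenSubseq w p lo hi := by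
  obtain ⟨a, b, hab⟩ := hvw
  obtain ⟨e, hmono, hlt, hget, hgap⟩ := h
  refine ⟨fun i => a.length + e i, ?_, ?_, ?_, ?_⟩
  · intro i j hij hj
    exact Nat.add_lt_add_left (hmono i j hij hj) _
  · intro i hi
    have h1 := hlt i hi
    have h2 : w.length = a.length + v.length + b.length := by
      rw [← hab]; simp; omega
    show a.length + e i < w.length
    omega
  · intro i hi
    have he := hlt i hi
    rw [← hab, List.append_assoc]
    rw [List.getElem?_append_right (by omega : a.length ≤ a.length + e i)]
    simp only [Nat.add_sub_cancel_left]
    rw [List.getElem?_append_left he]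
    exact hget i hi
  · intro i hi
    have h1 := hgap i hi
    have hm := hmono i (i+1) (Nat.lt_succ_self i) hi
    simp only []
    constructor <;> omega

lemma infix_intercalate {α : Type*} (sep : List α) {l : List α} {L : List (List α)}
    (h : l ∈ L) : l <:+: List.intercalate sep L := by
  unfold List.intercalate
  exact List.infix_of_mem_flatten (mem_intersperse_of_mem sep h)


/-- Γ is modelled as `Fin m` and Σ = Γ ∪ {#} as `Option (Fin m)` with `#` = `none`; all
length constraints are `(m-1, 3m-1)`. Let `K = T #^{3m} S(W_1) #^{3m} ⋯ #^{3m} S(W_q)`.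
Assuming the auxiliary facts (◇) the gc-subsequences of `T` are exactly the length-`k`
strings containing `#`, (†) the gc-subsequences of `S(W_i)` without `#` are exactly
`W_{i,1} ⋯ W_{i,k}`, and the decomposition fact that any gc-subsequence of `K` is already a
gc-subsequence of `T` or of some `S(W_i)`, we have: `K` is gc-universal iff
`⋃_i W_{i,1} · W_{i,2} ⋯ W_{i,k} = Γ^k`. -/
theorem stmt18 (m k q : ℕ) (hm : 1 ≤ m) (hk : 1 ≤ k)
    (W : Fin q → Fin k → Set (Fin m))
    (T : List (Option (Fin m))) (S : Fin q → List (Option (Fin m)))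
    (hT : {p : List (Option (Fin m)) | p.length = k ∧
          IsLenSubseq T p (fun _ => m - 1) (fun _ => 3 * m - 1)} =
        {p : List (Option (Fin m)) | p.length = k ∧ (none : Option (Fin m)) ∈ p})
    (hS : ∀ i, {p : List (Option (Fin m)) | p.length = k ∧
          IsLenSubseq (S i) p (fun _ => m - 1) (fun _ => 3 * m - 1) ∧
          (none : Option (Fin m)) ∉ p} =
        {p : List (Option (Fin m)) | ∃ u : Fin k → Fin m,
          p = List.ofFn (fun j => some (u j)) ∧ ∀ j, u j ∈ W i j})
    (hdec : ∀ p : List (Option (Fin m)), p.length = k →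
      IsLenSubseq
        (List.intercalate (List.replicate (3 * m) (none : Option (Fin m)))
          (T :: List.ofFn S)) p (fun _ => m - 1) (fun _ => 3 * m - 1) →
      IsLenSubseq T p (fun _ => m - 1) (fun _ => 3 * m - 1) ∨
        ∃ i, IsLenSubseq (S i) p (fun _ => m - 1) (fun _ => 3 * m - 1)) :
    ({p : List (Option (Fin m)) | p.length = k ∧
        IsLenSubseq
          (List.intercalate (List.replicate (3 * m) (none : Option (Fin m)))
            (T :: List.ofFn S)) p (fun _ => m - 1) (fun _ => 3 * m - 1)} =
      {p : List (Option (Fin m)) | p.length = k}) ↔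
      (⋃ i : Fin q, {u : Fin k → Fin m | ∀ j, u j ∈ W i j}) = Set.univ := by
  have hTinK : T <:+: List.intercalate (List.replicate (3 * m) (none : Option (Fin m)))
      (T :: List.ofFn S) := infix_intercalate _ List.mem_cons_self
  have hSinK : ∀ i, S i <:+: List.intercalate
      (List.replicate (3 * m) (none : Option (Fin m))) (T :: List.ofFn S) := fun i =>
    infix_intercalate _ (List.mem_cons.mpr (Or.inr ((List.mem_ofFn (f := S) (a := S i)).mpr ⟨i, rfl⟩)))
  constructor
  · intro huniv
    apply Set.eq_univ_of_forall
    intro u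
    set p : List (Option (Fin m)) := List.ofFn (fun j => some (u j)) with hp
    have hplen : p.length = k := by simp [hp]
    have hpK : IsLenSubseq (List.intercalate (List.replicate (3 * m) (none : Option (Fin m)))
        (T :: List.ofFn S)) p (fun _ => m - 1) (fun _ => 3 * m - 1) := by
      have : p ∈ {p : List (Option (Fin m)) | p.length = k} := hplen
      rw [← huniv] at this
      exact this.2
    have hnone : (none : Option (Fin m)) ∉ p := by
      simp [hp, List.mem_ofFn]
    rcases hdec p hplen hpK with h | ⟨i, h⟩
    · exfalso
      have : p ∈ {p : List (Option (Fin m)) | p.length = k ∧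
          IsLenSubseq T p (fun _ => m - 1) (fun _ => 3 * m - 1)} := ⟨hplen, h⟩
      rw [hT] at this
      exact hnone this.2
    · have : p ∈ {p : List (Option (Fin m)) | p.length = k ∧
          IsLenSubseq (S i) p (fun _ => m - 1) (fun _ => 3 * m - 1) ∧
          (none : Option (Fin m)) ∉ p} := ⟨hplen, h, hnone⟩
      rw [hS i] at this
      obtain ⟨u', hpu', hu'⟩ := this
      have : u = u' := by
        funext j
        have := congrArg (fun l => l[(j : ℕ)]?) hpu'
        simp [hp] at this
        exact this
      exact Set.mem_iUnion.mpr ⟨i, this ▸ hu'⟩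
  · intro huniv
    apply Set.eq_of_subset_of_subset
    · intro p hp; exact hp.1
    · intro p hplen
      have hplen' : p.length = k := hplen
      refine ⟨hplen, ?_⟩
      by_cases hnone : (none : Option (Fin m)) ∈ p
      · have : p ∈ {p : List (Option (Fin m)) | p.length = k ∧
            (none : Option (Fin m)) ∈ p} := ⟨hplen, hnone⟩
        rw [← hT] at this
        exact isLenSubseq_of_infix hTinK this.2
      · have hsome : ∀ j : Fin k, (p[(j : ℕ)]'(hplen' ▸ j.isLt)).isSome := by
          intro j
          have hmem : p[(j : ℕ)]'(hplen' ▸ j.isLt) ∈ p := List.getElem_mem _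
          cases hx : p[(j : ℕ)]'(hplen' ▸ j.isLt) with
          | none => exact absurd (hx ▸ hmem) hnone
          | some a => rfl
        set u : Fin k → Fin m := fun j => (p[(j : ℕ)]'(hplen' ▸ j.isLt)).get (hsome j) with hu
        have hpu : p = List.ofFn (fun j => some (u j)) := by
          apply List.ext_getElem
          · simp [hplen']
          · intro n h1 h2
            simp only [List.getElem_ofFn]
            have hnk : n < k := by rw [hplen'] at h1; exact h1
            simp [hu, Option.some_get]
        have : u ∈ ⋃ i : Fin q, {u : Fin k → Fin m | ∀ j, u j ∈ W i j} := by
          rw [huniv]; trivial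
        obtain ⟨i, hi⟩ := Set.mem_iUnion.mp this
        have : p ∈ {p : List (Option (Fin m)) | ∃ u : Fin k → Fin m,
            p = List.ofFn (fun j => some (u j)) ∧ ∀ j, u j ∈ W i j} := ⟨u, hpu, hi⟩
        rw [← hS i] at this
        exact isLenSubseq_of_infix (hSinK i) this.2.1
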